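/- In the model X = ε_X, Y = αX + ε_Y, Z = δY + ε_Z with independent centered errors of positive variances, σ_{XY·Z} ≠ α·σ²_{X·Z} whenever α ≠ 0 and δ ≠ 0, where σ_{XY·Z} and σ²_{X·Z} are the partial covariance and partial variance given Z. -/

import Mathlib

open MeasureTheory ProbabilityTheory

/-- Covariance of two real random variables. -/
noncomputable def cov {Ω : Type*} [MeasurableSpace Ω] (μ : Measure Ω) (X Y : Ω → ℝ) : ℝ :=
  ∫ ω, X ω * Y ω ∂μ - (∫ ω, X ω ∂μ) * (∫ ω, Y ω ∂μ)

/-- Counterexample: in the model X = ε_X, Y = αX + ε_Y, Z = δY + ε_Z, naively replacing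
(co)variances by partial (co)variances fails: σ_{XY·Z} ≠ α·σ²_{X·Z} when α ≠ 0, δ ≠ 0. -/
theorem stmt6 {Ω : Type*} [MeasurableSpace Ω] (μ : Measure Ω) [IsProbabilityMeasure μ]
    (α δ : ℝ) (hα : α ≠ 0) (hδ : δ ≠ 0) (e : Fin 3 → Ω → ℝ) (X Y Z : Ω → ℝ)
    (hmeas : ∀ i, Measurable (e i))
    (hindep : iIndepFun e μ)
    (hL2 : ∀ i, MemLp (e i) 2 μ)
    (hmean : ∀ i, ∫ ω, e i ω ∂μ = 0)
    (hvar : ∀ i, 0 < cov μ (e i) (e i))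
    (hX : ∀ ω, X ω = e 0 ω)
    (hY : ∀ ω, Y ω = α * X ω + e 1 ω)
    (hZ : ∀ ω, Z ω = δ * Y ω + e 2 ω) :
    cov μ X Y - cov μ X Z * cov μ Z Y / cov μ Z Z
      ≠ α * (cov μ X X - (cov μ X Z) ^ 2 / cov μ Z Z) := by
  -- integrability
  have hint : ∀ i, Integrable (e i) μ := fun i => (hL2 i).integrable one_le_two
  have hImul : ∀ i j, Integrable (fun ω => e i ω * e j ω) μ := by
    intro i j
    by_cases hij : i = j
    · subst hij
      have := (memLp_two_iff_integrable_sq (hL2 i).1).mp (hL2 i)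
      simpa [sq] using this
    · exact (hindep.indepFun hij).integrable_mul (hint i) (hint j)
  have hI : ∀ (c : ℝ) i j, Integrable (fun ω => c * (e i ω * e j ω)) μ :=
    fun c i j => (hImul i j).const_mul c
  -- cross moments vanish
  have hcross : ∀ i j, i ≠ j → ∫ ω, e i ω * e j ω ∂μ = 0 := by
    intro i j hij
    have := (hindep.indepFun hij).integral_mul_eq_mul_integral (hint i).1 (hint j).1
    simpa [hmean i, hmean j] using this
  set v0 := ∫ ω, e 0 ω * e 0 ω ∂μ with hv0
  set v1 := ∫ ω, e 1 ω * e 1 ω ∂μ with hv1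
  set v2 := ∫ ω, e 2 ω * e 2 ω ∂μ with hv2
  have hv0pos : 0 < v0 := by have := hvar 0; simpa [cov, hmean 0] using this
  have hv1pos : 0 < v1 := by have := hvar 1; simpa [cov, hmean 1] using this
  have hv2pos : 0 < v2 := by have := hvar 2; simpa [cov, hmean 2] using this
  -- key: integral of product of linear combinations
  have key : ∀ a0 a1 a2 b0 b1 b2 : ℝ,
      ∫ ω, (a0 * e 0 ω + a1 * e 1 ω + a2 * e 2 ω) *
        (b0 * e 0 ω + b1 * e 1 ω + b2 * e 2 ω) ∂μ
      = a0 * b0 * v0 + a1 * b1 * v1 + a2 * b2 * v2 := by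
    intro a0 a1 a2 b0 b1 b2
    have hfun : (fun ω => (a0 * e 0 ω + a1 * e 1 ω + a2 * e 2 ω) *
        (b0 * e 0 ω + b1 * e 1 ω + b2 * e 2 ω)) =
        fun ω => a0 * b0 * (e 0 ω * e 0 ω) + (a0 * b1 * (e 0 ω * e 1 ω) +
          (a0 * b2 * (e 0 ω * e 2 ω) + (a1 * b0 * (e 1 ω * e 0 ω) +
          (a1 * b1 * (e 1 ω * e 1 ω) + (a1 * b2 * (e 1 ω * e 2 ω) +
          (a2 * b0 * (e 2 ω * e 0 ω) + (a2 * b1 * (e 2 ω * e 1 ω) +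
          a2 * b2 * (e 2 ω * e 2 ω)))))))) := by
      funext ω; ring
    have T8 : Integrable (fun ω => a2 * b1 * (e 2 ω * e 1 ω) + a2 * b2 * (e 2 ω * e 2 ω)) μ :=
      (hI _ 2 1).add (hI _ 2 2)
    have T7 : Integrable (fun ω => a2 * b0 * (e 2 ω * e 0 ω) + (a2 * b1 * (e 2 ω * e 1 ω) + a2 * b2 * (e 2 ω * e 2 ω))) μ :=
      (hI _ 2 0).add T8
    have T6 : Integrable (fun ω => a1 * b2 * (e 1 ω * e 2 ω) + (a2 * b0 * (e 2 ω * e 0 ω) + (a2 * b1 * (e 2 ω * e 1 ω) + a2 * b2 * (e 2 ω * e 2 ω)))) μ :=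
      (hI _ 1 2).add T7
    have T5 : Integrable (fun ω => a1 * b1 * (e 1 ω * e 1 ω) + (a1 * b2 * (e 1 ω * e 2 ω) + (a2 * b0 * (e 2 ω * e 0 ω) + (a2 * b1 * (e 2 ω * e 1 ω) + a2 * b2 * (e 2 ω * e 2 ω))))) μ :=
      (hI _ 1 1).add T6
    have T4 : Integrable (fun ω => a1 * b0 * (e 1 ω * e 0 ω) + (a1 * b1 * (e 1 ω * e 1 ω) + (a1 * b2 * (e 1 ω * e 2 ω) + (a2 * b0 * (e 2 ω * e 0 ω) + (a2 * b1 * (e 2 ω * e 1 ω) + a2 * b2 * (e 2 ω * e 2 ω)))))) μ :=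
      (hI _ 1 0).add T5
    have T3 : Integrable (fun ω => a0 * b2 * (e 0 ω * e 2 ω) + (a1 * b0 * (e 1 ω * e 0 ω) + (a1 * b1 * (e 1 ω * e 1 ω) + (a1 * b2 * (e 1 ω * e 2 ω) + (a2 * b0 * (e 2 ω * e 0 ω) + (a2 * b1 * (e 2 ω * e 1 ω) + a2 * b2 * (e 2 ω * e 2 ω))))))) μ :=
      (hI _ 0 2).add T4
    have T2 : Integrable (fun ω => a0 * b1 * (e 0 ω * e 1 ω) + (a0 * b2 * (e 0 ω * e 2 ω) + (a1 * b0 * (e 1 ω * e 0 ω) + (a1 * b1 * (e 1 ω * e 1 ω) + (a1 * b2 * (e 1 ω * e 2 ω) + (a2 * b0 * (e 2 ω * e 0 ω) + (a2 * b1 * (e 2 ω * e 1 ω) + a2 * b2 * (e 2 ω * e 2 ω)))))))) μ :=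
      (hI _ 0 1).add T3
    rw [hfun, integral_add (hI _ 0 0) T2, integral_add (hI _ 0 1) T3,
      integral_add (hI _ 0 2) T4, integral_add (hI _ 1 0) T5,
      integral_add (hI _ 1 1) T6, integral_add (hI _ 1 2) T7,
      integral_add (hI _ 2 0) T8, integral_add (hI _ 2 1) (hI _ 2 2)]
    simp only [integral_const_mul]
    rw [hcross 0 1 (by decide), hcross 0 2 (by decide), hcross 1 0 (by decide),
      hcross 1 2 (by decide), hcross 2 0 (by decide), hcross 2 1 (by decide)]
    ring
  have keym : ∀ a0 a1 a2 : ℝ,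
      ∫ ω, (a0 * e 0 ω + a1 * e 1 ω + a2 * e 2 ω) ∂μ = 0 := by
    intro a0 a1 a2
    have S1 : Integrable (fun ω => a0 * e 0 ω + a1 * e 1 ω) μ :=
      ((hint 0).const_mul a0).add ((hint 1).const_mul a1)
    rw [integral_add S1 ((hint 2).const_mul a2),
      integral_add ((hint 0).const_mul a0) ((hint 1).const_mul a1)]
    simp [integral_const_mul, hmean 0, hmean 1, hmean 2]
  -- express X, Y, Z as linear combinations
  have hX' : X = fun ω => (1:ℝ) * e 0 ω + 0 * e 1 ω + 0 * e 2 ω := by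
    funext ω; rw [hX]; ring
  have hY' : Y = fun ω => α * e 0 ω + 1 * e 1 ω + 0 * e 2 ω := by
    funext ω; rw [hY, hX]; ring
  have hZ' : Z = fun ω => (δ * α) * e 0 ω + δ * e 1 ω + 1 * e 2 ω := by
    funext ω; rw [hZ, hY, hX]; ring
  have cXY : cov μ X Y = α * v0 := by
    rw [cov, hX', hY', key, keym, keym]; ring
  have cXZ : cov μ X Z = δ * α * v0 := by
    rw [cov, hX', hZ', key, keym, keym]; ring
  have cZY : cov μ Z Y = δ * (α ^ 2 * v0 + v1) := by
    rw [cov, hZ', hY', key, keym, keym]; ring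
  have cZZ : cov μ Z Z = δ ^ 2 * (α ^ 2 * v0 + v1) + v2 := by
    rw [cov, hZ', key, keym]; ring
  have cXX : cov μ X X = v0 := by
    rw [cov, hX', key, keym]; ring
  rw [cXY, cXZ, cZY, cZZ, cXX]
  have hD : 0 < δ ^ 2 * (α ^ 2 * v0 + v1) + v2 := by positivity
  intro h
  have h2 : α * (δ ^ 2 * v0 * v1) = 0 := by
    have hDne := hD.ne'
    field_simp at h
    linear_combination (-(α * v0)) * h
  exact absurd h2 (mul_ne_zero hα (by positivity))
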